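/- For any A ∈ U(n) with A·conj(A) = I there exists U ∈ U(n) such that A = U·conj(U)^{-1}. -/

import Mathlib

open Matrix
open scoped Matrix.Norms.L2Operator

noncomputable instance matrixCStarAlgebraAux (n : ℕ) :
    CStarAlgebra (Matrix (Fin n) (Fin n) ℂ) := {}

lemma cfc_mem_elemental_aux {n : ℕ} (A : Matrix (Fin n) (Fin n) ℂ) (hA : IsStarNormal A)
    (f : ℂ → ℂ) : cfc f A ∈ StarAlgebra.elemental ℂ A := by
  by_cases hf : ContinuousOn f (spectrum ℂ A)
  · rw [cfc_apply f A hA hf, cfcHom_eq_of_isStarNormal]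
    exact SetLike.coe_mem _
  · rw [cfc_apply_of_not_continuousOn A hf]
    exact zero_mem _

lemma transpose_eq_of_mem_elemental_aux {n : ℕ} {A M : Matrix (Fin n) (Fin n) ℂ}
    [IsStarNormal A] (hA : Aᵀ = A) (hM : M ∈ StarAlgebra.elemental ℂ A) : Mᵀ = M := by
  have htc : Continuous (fun X : Matrix (Fin n) (Fin n) ℂ => Xᵀ) :=
    LinearMap.continuous_of_finiteDimensional
      (Matrix.transposeLinearEquiv (Fin n) (Fin n) ℂ ℂ).toLinearMap
  let K : StarSubalgebra ℂ (Matrix (Fin n) (Fin n) ℂ) :=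
  { carrier := {X | X ∈ StarAlgebra.elemental ℂ A ∧ Xᵀ = X}
    mul_mem' := by
      rintro x y ⟨hx1, hx2⟩ ⟨hy1, hy2⟩
      refine ⟨mul_mem hx1 hy1, ?_⟩
      have hc : y * x = x * y := by
        have := mul_comm (⟨x, hx1⟩ : StarAlgebra.elemental ℂ A) ⟨y, hy1⟩
        simpa [Subtype.ext_iff] using this.symm
      rw [Matrix.transpose_mul, hx2, hy2, hc]
    one_mem' := ⟨one_mem _, Matrix.transpose_one⟩
    add_mem' := by
      rintro x y ⟨hx1, hx2⟩ ⟨hy1, hy2⟩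
      exact ⟨add_mem hx1 hy1, by rw [Matrix.transpose_add, hx2, hy2]⟩
    zero_mem' := ⟨zero_mem _, Matrix.transpose_zero⟩
    algebraMap_mem' := by
      intro r
      refine ⟨algebraMap_mem _ r, ?_⟩
      simp [Matrix.algebraMap_eq_diagonal]
    star_mem' := by
      rintro x ⟨hx1, hx2⟩
      refine ⟨star_mem hx1, ?_⟩
      ext i j
      simp only [Matrix.transpose_apply, Matrix.star_eq_conjTranspose,
        Matrix.conjTranspose_apply]
      conv_rhs => rw [← hx2]
      rw [Matrix.transpose_apply] }
  have hKclosed : IsClosed (K : Set (Matrix (Fin n) (Fin n) ℂ)) := by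
    have : (K : Set (Matrix (Fin n) (Fin n) ℂ)) =
        (StarAlgebra.elemental ℂ A : Set (Matrix (Fin n) (Fin n) ℂ)) ∩
          {X | Xᵀ = X} := rfl
    rw [this]
    exact (StarAlgebra.elemental.isClosed ℂ A).inter (isClosed_eq htc continuous_id)
  have hAK : A ∈ K := ⟨StarAlgebra.elemental.self_mem ℂ A, hA⟩
  exact (StarAlgebra.elemental.le_of_mem hKclosed hAK hM).2

theorem stmt_13 (n : ℕ) (A : Matrix (Fin n) (Fin n) ℂ)
    (hAU : A ∈ Matrix.unitaryGroup (Fin n) ℂ)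
    (hA : A * A.map (starRingEnd ℂ) = 1) :
    ∃ U : Matrix (Fin n) (Fin n) ℂ, U ∈ Matrix.unitaryGroup (Fin n) ℂ ∧
      A = U * (U.map (starRingEnd ℂ))⁻¹ := by
  classical
  have h1 : star A * A = 1 := Matrix.mem_unitaryGroup_iff'.mp hAU
  have h1' : A * star A = 1 := Matrix.mem_unitaryGroup_iff.mp hAU
  haveI hnormal : IsStarNormal A := ⟨by rw [Commute, SemiconjBy, h1, h1']⟩
  have h2 : A.map (starRingEnd ℂ) = star A := by
    calc A.map (starRingEnd ℂ) = (star A * A) * A.map (starRingEnd ℂ) := by rw [h1, one_mul]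
      _ = star A * (A * A.map (starRingEnd ℂ)) := by rw [mul_assoc]
      _ = star A := by rw [hA, mul_one]
  have hsymm : Aᵀ = A := by
    ext i j
    have h3 : (starRingEnd ℂ) (A i j) = (starRingEnd ℂ) (A j i) := by
      have := congrFun (congrFun h2 i) j
      simpa [Matrix.map_apply, Matrix.star_eq_conjTranspose, Matrix.conjTranspose_apply]
        using this
    have h4 := (starRingEnd ℂ).injective h3
    simpa [Matrix.transpose_apply] using h4.symm
  set f : ℂ → ℂ := fun z => Complex.exp (Complex.log z / 2) with hfdef
  have hspec : ∀ z ∈ spectrum ℂ A, ‖z‖ = 1 := by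
    intro z hz
    have := spectrum.subset_circle_of_unitary (u := A)
      (Unitary.mem_iff.mpr ⟨h1, h1'⟩) hz
    simpa using mem_sphere_zero_iff_norm.mp this
  have hcont : ContinuousOn f (spectrum ℂ A) := (Matrix.finite_spectrum A).continuousOn _
  have habs : ∀ z ∈ spectrum ℂ A, ‖f z‖ = 1 := by
    intro z hz
    have hz1 : ‖z‖ = 1 := by simpa using hspec z hz
    simp [hfdef, Complex.norm_exp, Complex.div_re, Complex.log_re, hz1]
  have hsq : ∀ z ∈ spectrum ℂ A, f z ^ 2 = z := by
    intro z hz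
    have hz0 : z ≠ 0 := by
      intro h
      rw [h] at hz
      have := hspec 0 hz
      simp at this
    calc Complex.exp (Complex.log z / 2) ^ 2
        = Complex.exp ((2 : ℕ) * (Complex.log z / 2)) := (Complex.exp_nat_mul _ 2).symm
      _ = Complex.exp (Complex.log z) := by

          congr 1
          push_cast
          ring
      _ = z := Complex.exp_log hz0
  have hstar1 : ∀ z ∈ spectrum ℂ A, star (f z) * f z = 1 := by
    intro z hz
    rw [mul_comm, Complex.star_def, Complex.mul_conj]
    rw [Complex.normSq_eq_norm_sq, habs z hz]
    norm_num
  have hstar2 : ∀ z ∈ spectrum ℂ A, f z * star (f z) = 1 := by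
    intro z hz
    rw [mul_comm]
    exact hstar1 z hz
  have hcont' : ContinuousOn (fun z => star (f z)) (spectrum ℂ A) :=
    (Matrix.finite_spectrum A).continuousOn _
  set S := cfc f A with hSdef
  have hS2 : S * S = A := by
    have e1 : cfc (fun z => f z ^ 2) A = S ^ 2 := cfc_pow f 2 A hcont
    have e2 : cfc (fun z => f z ^ 2) A = cfc (id : ℂ → ℂ) A := cfc_congr hsq
    rw [cfc_id ℂ A] at e2
    rw [← sq, ← e1, e2]
  have hSstar : star S * S = 1 := by
    have e1 : cfc (fun z => star (f z) * f z) A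
        = cfc (fun z => star (f z)) A * cfc f A := cfc_mul _ _ A hcont' hcont
    rw [cfc_star f A] at e1
    have e2 : cfc (fun z => star (f z) * f z) A = cfc (fun _ : ℂ => (1 : ℂ)) A :=
      cfc_congr hstar1
    rw [cfc_const_one ℂ A] at e2
    rw [← e1, e2]
  have hSstar' : S * star S = 1 := by
    have e1 : cfc (fun z => f z * star (f z)) A
        = cfc f A * cfc (fun z => star (f z)) A := cfc_mul _ _ A hcont hcont'
    rw [cfc_star f A] at e1
    have e2 : cfc (fun z => f z * star (f z)) A = cfc (fun _ : ℂ => (1 : ℂ)) A :=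
      cfc_congr hstar2
    rw [cfc_const_one ℂ A] at e2
    rw [← e1, e2]
  have hSU : S ∈ Matrix.unitaryGroup (Fin n) ℂ := Matrix.mem_unitaryGroup_iff.mpr hSstar'
  have hSsym : Sᵀ = S := transpose_eq_of_mem_elemental_aux hsymm
    (cfc_mem_elemental_aux A hnormal f)
  have hmap : S.map (starRingEnd ℂ) = star S := by
    ext i j
    simp only [Matrix.map_apply, Matrix.star_eq_conjTranspose, Matrix.conjTranspose_apply]
    conv_rhs => rw [← hSsym]
    rw [Matrix.transpose_apply]
    simp [Complex.star_def]
  have hinv : (star S)⁻¹ = S := Matrix.inv_eq_right_inv hSstar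
  exact ⟨S, hSU, by rw [hmap, hinv, hS2]⟩
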